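/- Let X be a finite set of cardinality N ≥ 1, and let Y be a family of subsets of X that is an antichain (for all distinct A, B ∈ Y, neither A ⊆ B nor B ⊆ A). Then |Y| ≤ 2^N / √N. -/

import Mathlib

lemma aux_centralBinom_sq (m : ℕ) :
    (2 * m + 1) * (Nat.centralBinom m) ^ 2 ≤ 16 ^ m := by
  induction m with
  | zero => simp [Nat.centralBinom]
  | succ m ih =>
    have key := Nat.succ_mul_centralBinom_succ m
    have h1 : (m + 1) ^ 2 * ((2 * (m + 1) + 1) * (Nat.centralBinom (m + 1)) ^ 2)
        ≤ (m + 1) ^ 2 * 16 ^ (m + 1) := by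
      have h2 : (m + 1) ^ 2 * ((2 * (m + 1) + 1) * (Nat.centralBinom (m + 1)) ^ 2)
          = (2 * m + 3) * ((m + 1) * Nat.centralBinom (m + 1)) ^ 2 := by ring
      rw [h2, key]
      have h3 : (2 * m + 3) * (2 * (2 * m + 1) * Nat.centralBinom m) ^ 2
          = (4 * (2 * m + 3) * (2 * m + 1)) * ((2 * m + 1) * (Nat.centralBinom m) ^ 2) := by
        ring
      rw [h3]
      calc (4 * (2 * m + 3) * (2 * m + 1)) * ((2 * m + 1) * (Nat.centralBinom m) ^ 2)
          ≤ (4 * (2 * m + 3) * (2 * m + 1)) * 16 ^ m :=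
            Nat.mul_le_mul_left _ ih
        _ ≤ ((m + 1) ^ 2 * 16) * 16 ^ m := Nat.mul_le_mul_right _ (by nlinarith)
        _ = (m + 1) ^ 2 * 16 ^ (m + 1) := by ring
    exact Nat.le_of_mul_le_mul_left h1 (by positivity)

lemma aux_real_centralBinom (m : ℕ) :
    (Nat.centralBinom m : ℝ) * Real.sqrt (2 * m + 1) ≤ 4 ^ m := by
  have h : ((2 * m + 1 : ℕ) : ℝ) * (Nat.centralBinom m : ℝ) ^ 2 ≤ (16 : ℝ) ^ m := by
    have := aux_centralBinom_sq m
    calc ((2 * m + 1 : ℕ) : ℝ) * (Nat.centralBinom m : ℝ) ^ 2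
        = (((2 * m + 1) * (Nat.centralBinom m) ^ 2 : ℕ) : ℝ) := by push_cast; ring
      _ ≤ ((16 ^ m : ℕ) : ℝ) := Nat.cast_le.mpr this
      _ = (16 : ℝ) ^ m := by push_cast; ring
  have hnn : (0 : ℝ) ≤ (Nat.centralBinom m : ℝ) * Real.sqrt (2 * m + 1) := by positivity
  have hsq : ((Nat.centralBinom m : ℝ) * Real.sqrt (2 * m + 1)) ^ 2 ≤ ((4 : ℝ) ^ m) ^ 2 := by
    have hs : Real.sqrt (2 * m + 1) ^ 2 = (2 * m + 1 : ℝ) := Real.sq_sqrt (by positivity)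
    rw [mul_pow, hs]
    calc (Nat.centralBinom m : ℝ) ^ 2 * (2 * m + 1 : ℝ)
        = ((2 * m + 1 : ℕ) : ℝ) * (Nat.centralBinom m : ℝ) ^ 2 := by push_cast; ring
      _ ≤ (16 : ℝ) ^ m := h
      _ = ((4 : ℝ) ^ m) ^ 2 := by
          rw [show (16 : ℝ) = 4 ^ 2 by norm_num, ← pow_mul, mul_comm, pow_mul]
  calc (Nat.centralBinom m : ℝ) * Real.sqrt (2 * m + 1)
      = Real.sqrt (((Nat.centralBinom m : ℝ) * Real.sqrt (2 * m + 1)) ^ 2) :=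
        (Real.sqrt_sq hnn).symm
    _ ≤ Real.sqrt (((4 : ℝ) ^ m) ^ 2) := Real.sqrt_le_sqrt hsq
    _ = (4 : ℝ) ^ m := Real.sqrt_sq (by positivity)

lemma middle_choose_le (n : ℕ) (hn : 1 ≤ n) :
    (n.choose (n / 2) : ℝ) * Real.sqrt n ≤ 2 ^ n := by
  rcases Nat.even_or_odd n with ⟨m, hm⟩ | ⟨m, hm⟩
  · subst hm
    have hm1 : 1 ≤ m := by omega
    have hdiv : (m + m) / 2 = m := by omega
    have hch : (m + m).choose ((m + m) / 2) = Nat.centralBinom m := by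
      rw [hdiv, Nat.centralBinom, two_mul]
    rw [hch]
    push_cast
    calc (Nat.centralBinom m : ℝ) * Real.sqrt ((m : ℝ) + m)
        ≤ (Nat.centralBinom m : ℝ) * Real.sqrt (2 * m + 1) := by
          apply mul_le_mul_of_nonneg_left _ (by positivity)
          apply Real.sqrt_le_sqrt; push_cast; linarith
      _ ≤ 4 ^ m := aux_real_centralBinom m
      _ = 2 ^ (m + m) := by
          rw [show (4 : ℝ) = 2 ^ 2 by norm_num, ← pow_mul, two_mul m]
  · subst hm
    have hdiv : (2 * m + 1) / 2 = m := by omega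
    have hch : 2 * (2 * m + 1).choose m = Nat.centralBinom (m + 1) := by
      have hsymm : (2 * m + 1).choose (m + 1) = (2 * m + 1).choose m := by
        have h := Nat.choose_symm (show m + 1 ≤ 2 * m + 1 by omega)
        rw [show 2 * m + 1 - (m + 1) = m by omega] at h
        exact h.symm
      rw [Nat.centralBinom, show 2 * (m + 1) = (2 * m + 1) + 1 by ring,
        Nat.choose_succ_succ, hsymm]
      ring
    rw [hdiv]
    have hcb := aux_real_centralBinom (m + 1)
    have h2 : (Nat.centralBinom (m + 1) : ℝ) = 2 * ((2 * m + 1).choose m : ℝ) := by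
      rw [← hch]; push_cast; ring
    rw [h2] at hcb
    push_cast at hcb
    have hsle : Real.sqrt (2 * m + 1 : ℕ) ≤ Real.sqrt (2 * (m + 1) + 1 : ℝ) := by
      apply Real.sqrt_le_sqrt; push_cast; linarith
    calc ((2 * m + 1).choose m : ℝ) * Real.sqrt (2 * m + 1 : ℕ)
        ≤ ((2 * m + 1).choose m : ℝ) * Real.sqrt (2 * (m + 1) + 1 : ℝ) :=
          mul_le_mul_of_nonneg_left hsle (by positivity)
      _ ≤ 4 ^ (m + 1) / 2 := by linarith
      _ = 2 ^ (2 * m + 1) := by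
          rw [show (4 : ℝ) = 2 ^ 2 by norm_num, ← pow_mul,
            show 2 * (m + 1) = (2 * m + 1) + 1 by ring, pow_succ,
            mul_div_cancel_right₀ _ (two_ne_zero' ℝ)]

/-- Sperner-type bound: an antichain of subsets of an `N`-element set (`N ≥ 1`) has
at most `2^N / √N` members. -/
theorem antichain_card_le_two_pow_div_sqrt
    {X : Type*} [Fintype X] (N : ℕ) (hN : 1 ≤ N) (hX : Fintype.card X = N)
    (Y : Finset (Finset X))
    (hY : IsAntichain (· ⊆ ·) (↑Y : Set (Finset X))) :
    (Y.card : ℝ) ≤ 2 ^ N / Real.sqrt N := by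
  classical
  have hs := IsAntichain.sperner hY
  rw [hX] at hs
  have h1 : (Y.card : ℝ) ≤ (N.choose (N / 2) : ℝ) := Nat.cast_le.mpr hs
  have h2 := middle_choose_le N hN
  have hpos : 0 < Real.sqrt N := Real.sqrt_pos.mpr (by exact_mod_cast hN)
  rw [le_div_iff₀ hpos]
  calc (Y.card : ℝ) * Real.sqrt N ≤ (N.choose (N / 2) : ℝ) * Real.sqrt N :=
        mul_le_mul_of_nonneg_right h1 hpos.le
    _ ≤ 2 ^ N := h2
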